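/- For every natural number m, the game *m + * equals *(m ⊕ 1) under misère equality: for every impartial game X, the games *m + * + X and *(m ⊕ 1) + X have the same misère outcome. Here ⊕ denotes bitwise XOR. -/

import Mathlib

/-! Combinatorial game theory (`SetTheory.PGame`, its sum, `nim`, `Impartial`) has been
removed from Mathlib; the notions used below are re-declared here with their old
(December 2024 Mathlib) meaning. -/

universe u

namespace SetTheory

/-- Pre-games, as in the old Mathlib. -/
inductive PGame : Type (u + 1)
  | mk : ∀ α β : Type u, (α → PGame) → (β → PGame) → PGame

namespace PGame

/-- Left options. -/
def LeftMoves : PGame → Type u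
  | mk l _ _ _ => l

/-- Right options. -/
def RightMoves : PGame → Type u
  | mk _ r _ _ => r

/-- Left move. -/
def moveLeft : ∀ g : PGame, LeftMoves g → PGame
  | mk _l _ L _ => L

/-- Right move. -/
def moveRight : ∀ g : PGame, RightMoves g → PGame
  | mk _ _r _ R => R

/-- The pair `(x ≤ y, x ⧏ y)`, defined by simultaneous recursion as in the old Mathlib:
`x ≤ y` iff every `xL i ⧏ y` and every `x ⧏ yR j`; `x ⧏ y` iff some `x ≤ yL i` or
some `xR j ≤ y`. -/
noncomputable def leLF (x : PGame.{u}) : PGame.{u} → Prop × Prop := by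
  induction x with
  | mk xl xr xL xR IHxl IHxr =>
    intro y
    induction y with
    | mk yl yr yL yR IHyl IHyr =>
      exact (((∀ i, (IHxl i (mk yl yr yL yR)).2) ∧ ∀ j, (IHyr j).2),
        ((∃ i, (IHyl i).1) ∨ ∃ j, (IHxr j (mk yl yr yL yR)).1))

instance : LE PGame.{u} :=
  ⟨fun x y => (leLF x y).1⟩

/-- Equivalence of pre-games: `x ≤ y ∧ y ≤ x`. -/
def Equiv (x y : PGame.{u}) : Prop :=
  x ≤ y ∧ y ≤ x

instance : HasEquiv PGame.{u} :=
  ⟨Equiv⟩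

/-- Negation of a pre-game. -/
def neg : PGame.{u} → PGame.{u}
  | ⟨l, r, L, R⟩ => ⟨r, l, fun i => neg (R i), fun i => neg (L i)⟩

instance : Neg PGame.{u} :=
  ⟨neg⟩

/-- Disjunctive sum of pre-games. -/
noncomputable instance : Add PGame.{u} :=
  ⟨fun x y => by
    induction x generalizing y with | mk xl xr _ _ IHxl IHxr => _
    induction y with | mk yl yr yL yR IHyl IHyr => _
    have y := mk yl yr yL yR
    refine ⟨xl ⊕ yl, xr ⊕ yr, Sum.rec ?_ ?_, Sum.rec ?_ ?_⟩
    · exact fun i => IHxl i y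
    · exact IHyl
    · exact fun i => IHxr i y
    · exact IHyr⟩

/-- Auxiliary for impartiality. -/
def ImpartialAux : PGame.{u} → Prop
  | mk l r L R => (mk l r L R ≈ -mk l r L R) ∧ (∀ i, ImpartialAux (L i)) ∧
      ∀ j, ImpartialAux (R j)

/-- Impartial pre-games. -/
class Impartial (G : PGame.{u}) : Prop where
  out : ImpartialAux G

/-- The nim game `nim o`, as in the old Mathlib. -/
noncomputable def nim (o : Ordinal.{u}) : PGame.{u} :=
  ⟨o.ToType, o.ToType,
    fun x => nim ((Ordinal.ToType.mk (o := o)).symm x).val,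
    fun x => nim ((Ordinal.ToType.mk (o := o)).symm x).val⟩
termination_by o
decreasing_by all_goals exact ((Ordinal.ToType.mk (o := o)).symm x).prop

end PGame

end SetTheory

open SetTheory PGame

/-- `G` is a misère P-position: `G` has at least one option and every option of `G` is a
misère N-position (i.e. not a misère P-position).  In particular the empty game `0` is a
misère N-position.  (For an impartial game the options are the left moves.) -/
def MisereP : PGame → Prop
  | PGame.mk l _ L _ => Nonempty l ∧ ∀ i, ¬ MisereP (L i)


theorem Nat.xor_cancel_right (n m : ℕ) : (m ^^^ n) ^^^ n = m := by
  rw [Nat.xor_assoc, Nat.xor_self, Nat.xor_zero]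

def IsOpt (y x : PGame.{u}) : Prop := ∃ i, x.moveLeft i = y

theorem isOpt_wf : WellFounded (IsOpt.{u}) := ⟨fun x => by
  induction x with
  | mk l r L R ih => exact ⟨_, by rintro y ⟨i, rfl⟩; exact ih i⟩⟩

instance : WellFoundedRelation PGame.{u} := ⟨IsOpt, isOpt_wf⟩

def toLeftMovesAdd {x y : PGame.{u}} : x.LeftMoves ⊕ y.LeftMoves ≃ (x + y).LeftMoves := by
  cases x; cases y; exact Equiv.refl _

theorem add_moveLeft_inl {x y : PGame.{u}} (i : x.LeftMoves) :
    (x + y).moveLeft (toLeftMovesAdd (Sum.inl i)) = x.moveLeft i + y := by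
  cases x; cases y; rfl

theorem add_moveLeft_inr {x y : PGame.{u}} (i : y.LeftMoves) :
    (x + y).moveLeft (toLeftMovesAdd (Sum.inr i)) = x + y.moveLeft i := by
  cases x; cases y; rfl

theorem leftMoves_add_cases {x y : PGame.{u}} (k) {P : (x + y).LeftMoves → Prop}
    (hl : ∀ i, P (toLeftMovesAdd (Sum.inl i))) (hr : ∀ i, P (toLeftMovesAdd (Sum.inr i))) :
    P k := by
  rw [← toLeftMovesAdd.apply_symm_apply k]
  cases toLeftMovesAdd.symm k with
  | inl i => exact hl i
  | inr i => exact hr i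

inductive Relabelling : PGame.{u} → PGame.{u} → Prop
  | mk {x y : PGame.{u}} (L : x.LeftMoves ≃ y.LeftMoves)
      (R : ∀ i, Relabelling (x.moveLeft i) (y.moveLeft (L i))) : Relabelling x y

theorem Relabelling.refl (x : PGame.{u}) : Relabelling x x := by
  induction x with
  | mk l r L R ih => exact ⟨Equiv.refl _, fun i => ih i⟩

theorem Relabelling.addCongr {w x y z : PGame.{u}} (h1 : Relabelling w x)
    (h2 : Relabelling y z) : Relabelling (w + y) (x + z) := by
  induction h1 generalizing y z with
  | mk L R ih =>
    induction h2 with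
    | mk L' R' ih' =>
      refine ⟨toLeftMovesAdd.symm.trans ((L.sumCongr L').trans toLeftMovesAdd), fun i => ?_⟩
      rw [← toLeftMovesAdd.apply_symm_apply i]
      cases toLeftMovesAdd.symm i with
      | inl a =>
        simp only [Equiv.trans_apply, Equiv.symm_apply_apply, Equiv.sumCongr_apply, Sum.map_inl,
          add_moveLeft_inl]
        exact ih a (Relabelling.mk L' R')
      | inr b =>
        simp only [Equiv.trans_apply, Equiv.symm_apply_apply, Equiv.sumCongr_apply, Sum.map_inr,
          add_moveLeft_inr]
        exact ih' b

theorem Relabelling.addEmpty (x y : PGame.{u}) (hy : IsEmpty y.LeftMoves) :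
    Relabelling (x + y) x := by
  induction x with
  | mk l r L R ih =>
    refine ⟨toLeftMovesAdd.symm.trans (Equiv.sumEmpty _ _), fun i => ?_⟩
    rw [← toLeftMovesAdd.apply_symm_apply i]
    cases toLeftMovesAdd.symm i with
    | inl a =>
      simp only [Equiv.trans_apply, Equiv.symm_apply_apply, add_moveLeft_inl]
      exact ih a
    | inr b => exact hy.elim b

theorem nim_eq (o : Ordinal.{u}) : nim o = PGame.mk o.ToType o.ToType
    (fun x => nim ((Ordinal.ToType.mk (o := o)).symm x).val)
    (fun x => nim ((Ordinal.ToType.mk (o := o)).symm x).val) := by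
  rw [nim]

theorem nim_moveLeft_exists (o : Ordinal.{u}) :
    ∀ i : (nim o).LeftMoves, ∃ o' < o, (nim o).moveLeft i = nim o' := by
  rw [nim_eq o]
  intro i
  exact ⟨_, ((Ordinal.ToType.mk (o := o)).symm i).prop, rfl⟩

theorem nim_moveLeft_of_lt {o o' : Ordinal.{u}} (h : o' < o) :
    ∃ i : (nim o).LeftMoves, (nim o).moveLeft i = nim o' := by
  rw [nim_eq o]
  exact ⟨Ordinal.ToType.mk ⟨o', h⟩, congrArg (fun a => nim (Subtype.val a))
    ((Ordinal.ToType.mk (o := o)).symm_apply_apply ⟨o', h⟩)⟩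

theorem isEmpty_nim_zero_leftMoves : IsEmpty (nim (0 : Ordinal.{u})).LeftMoves :=
  ⟨fun i => by
    obtain ⟨o', h, -⟩ := nim_moveLeft_exists 0 i
    exact absurd h (by simp)⟩

theorem nim_one_leftMoves_nonempty : Nonempty (nim (1 : Ordinal.{u})).LeftMoves := by
  obtain ⟨i, -⟩ := nim_moveLeft_of_lt (o := (1 : Ordinal.{u})) (o' := 0) zero_lt_one
  exact ⟨i⟩

theorem SetTheory.PGame.Impartial.moveLeft_impartial {G : PGame.{u}} [h : G.Impartial]
    (j : G.LeftMoves) : (G.moveLeft j).Impartial := by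
  cases G with
  | mk l r L R =>
    have hh := h.out
    unfold ImpartialAux at hh
    exact ⟨hh.2.1 j⟩

theorem misereP_def (G : PGame) :
    MisereP G ↔ Nonempty G.LeftMoves ∧ ∀ i, ¬ MisereP (G.moveLeft i) := by
  cases G
  rw [MisereP]
  exact Iff.rfl

theorem xor1_even (m : ℕ) (h : m % 2 = 0) : m ^^^ 1 = m + 1 := by
  apply Nat.eq_of_testBit_eq
  intro i
  cases i with
  | zero => simp [Nat.testBit_zero, Nat.testBit_xor]
  | succ n =>
    rw [Nat.testBit_xor, Nat.testBit_add_one, Nat.testBit_add_one (m+1)]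
    have h2 : (m+1)/2 = m/2 := by omega
    rw [h2, Nat.testBit_add_one 1]
    norm_num

theorem xor1_odd (m : ℕ) (h : m % 2 = 1) : m ^^^ 1 = m - 1 := by
  have h2 : (m-1) % 2 = 0 := by omega
  have h3 := xor1_even (m-1) h2
  have hm : m - 1 + 1 = m := by omega
  rw [hm] at h3
  have h4 : m ^^^ 1 = ((m-1) ^^^ 1) ^^^ 1 := by rw [h3]
  rw [h4, Nat.xor_cancel_right]

theorem xor1_lt_of_lt_even {k m : ℕ} (hm : m % 2 = 0) (h : k < m) : k ^^^ 1 < m := by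
  rcases Nat.even_or_odd k with he | ho
  · have hk := Nat.even_iff.1 he
    rw [xor1_even k hk]
    omega
  · rw [xor1_odd k (Nat.odd_iff.1 ho)]
    omega

theorem misereP_congr {x y : PGame} (r : Relabelling x y) : MisereP x ↔ MisereP y := by
  induction r with
  | mk L R ih =>
    rw [misereP_def, misereP_def]
    constructor
    · rintro ⟨h1, h2⟩
      refine ⟨h1.map L, fun j hP => ?_⟩
      exact h2 (L.symm j) ((ih (L.symm j)).2 (by rwa [Equiv.apply_symm_apply]))
    · rintro ⟨h1, h2⟩
      refine ⟨h1.map L.symm, fun i hP => ?_⟩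
      exact h2 (L i) ((ih i).1 hP)

theorem nim_nat_moveLeft (m : ℕ) (i : (nim (m : Ordinal)).LeftMoves) :
    ∃ k : ℕ, k < m ∧ (nim (m : Ordinal)).moveLeft i = nim (k : Ordinal) := by
  obtain ⟨o', h, he⟩ := nim_moveLeft_exists _ i
  obtain ⟨k, hk⟩ := Ordinal.lt_omega0.1 (h.trans (Ordinal.natCast_lt_omega0 m))
  refine ⟨k, ?_, ?_⟩
  · have : ((k : Ordinal)) < (m : Ordinal) := hk ▸ h
    exact_mod_cast this
  · rw [he, hk]

theorem nim_nat_exists_moveLeft {m k : ℕ} (h : k < m) :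
    ∃ i, (nim (m : Ordinal)).moveLeft i = nim (k : Ordinal) :=
  nim_moveLeft_of_lt (by exact_mod_cast h)

theorem nim_one_moveLeft' (i : (nim (1 : Ordinal)).LeftMoves) :
    (nim (1 : Ordinal)).moveLeft i = nim 0 := by
  obtain ⟨o', h, he⟩ := nim_moveLeft_exists _ i
  rw [he, Ordinal.lt_one_iff_zero.1 h]

theorem nim_nat_leftMoves_nonempty {n : ℕ} (h : 0 < n) :
    Nonempty (nim (n : Ordinal)).LeftMoves := by
  obtain ⟨i, -⟩ := nim_moveLeft_of_lt (o := (n : Ordinal)) (o' := 0) (by exact_mod_cast h)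
  exact ⟨i⟩

/-- Characterization of misère P-positions for `nim n + X`. -/
theorem misereP_nim_add_iff (n : ℕ) (X : PGame) :
    MisereP (nim (n : Ordinal) + X) ↔
      (0 < n ∨ Nonempty X.LeftMoves) ∧
      (∀ k < n, ¬ MisereP (nim (k : Ordinal) + X)) ∧
      (∀ j, ¬ MisereP (nim (n : Ordinal) + X.moveLeft j)) := by
  rw [misereP_def]
  constructor
  · rintro ⟨h1, h2⟩
    refine ⟨?_, ?_, ?_⟩
    · obtain ⟨i⟩ := h1
      rcases toLeftMovesAdd.symm i with i' | j
      · left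
        obtain ⟨o', h, -⟩ := nim_moveLeft_exists _ i'
        have h0 : (0 : Ordinal) < (n : Ordinal) := lt_of_le_of_lt zero_le h
        exact_mod_cast h0
      · exact Or.inr ⟨j⟩
    · intro k hk hP
      obtain ⟨i, hi⟩ := nim_nat_exists_moveLeft hk
      have := h2 (toLeftMovesAdd (Sum.inl i))
      rw [add_moveLeft_inl, hi] at this
      exact this hP
    · intro j hP
      have := h2 (toLeftMovesAdd (Sum.inr j))
      rw [add_moveLeft_inr] at this
      exact this hP
  · rintro ⟨h0, h1, h2⟩
    constructor
    · rcases h0 with h | hj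
      · obtain ⟨i⟩ := nim_nat_leftMoves_nonempty h
        exact ⟨toLeftMovesAdd (Sum.inl i)⟩
      · obtain ⟨j⟩ := hj
        exact ⟨toLeftMovesAdd (Sum.inr j)⟩
    · intro i
      refine leftMoves_add_cases (P := fun i =>
        ¬ MisereP ((nim (n : Ordinal) + X).moveLeft i)) i ?_ ?_
      · intro i'
        rw [add_moveLeft_inl]
        obtain ⟨k, hk, hk'⟩ := nim_nat_moveLeft n i'
        rw [hk']
        exact h1 k hk
      · intro j
        rw [add_moveLeft_inr]
        exact h2 j

theorem not_misereP_of_lt {k n : ℕ} (h : k < n) (X : PGame)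
    (hP : MisereP (nim (k : Ordinal) + X)) : ¬ MisereP (nim (n : Ordinal) + X) := fun hN =>
  ((misereP_nim_add_iff n X).1 hN).2.1 k h hP

/-- Relabelling of the star move of `nim m + * + X`. -/
theorem starMoveRelabelling (m : ℕ) (X : PGame) :
    Relabelling (nim (m : Ordinal) + nim 0 + X) (nim (m : Ordinal) + X) :=
  (Relabelling.addEmpty _ _ isEmpty_nim_zero_leftMoves).addCongr (Relabelling.refl X)

/-- Characterization of misère P-positions for `nim m + * + X`. -/
theorem misereP_nim_add_star_iff (m : ℕ) (X : PGame) :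
    MisereP (nim (m : Ordinal) + nim (1 : Ordinal) + X) ↔
      (∀ k < m, ¬ MisereP (nim (k : Ordinal) + nim (1 : Ordinal) + X)) ∧
      ¬ MisereP (nim (m : Ordinal) + X) ∧
      (∀ j, ¬ MisereP (nim (m : Ordinal) + nim (1 : Ordinal) + X.moveLeft j)) := by
  rw [misereP_def]
  constructor
  · rintro ⟨h1, h2⟩
    refine ⟨?_, ?_, ?_⟩
    · intro k hk hP
      obtain ⟨i, hi⟩ := nim_nat_exists_moveLeft hk
      have := h2 (toLeftMovesAdd (Sum.inl (toLeftMovesAdd (Sum.inl i))))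
      rw [add_moveLeft_inl, add_moveLeft_inl, hi] at this
      exact this hP
    · intro hP
      have := h2 (toLeftMovesAdd (Sum.inl (toLeftMovesAdd
        (Sum.inr nim_one_leftMoves_nonempty.some))))
      rw [add_moveLeft_inl, add_moveLeft_inr, nim_one_moveLeft'] at this
      exact this ((misereP_congr (starMoveRelabelling m X)).2 hP)
    · intro j hP
      have := h2 (toLeftMovesAdd (Sum.inr j))
      rw [add_moveLeft_inr] at this
      exact this hP
  · rintro ⟨h1, h2, h3⟩
    refine ⟨⟨toLeftMovesAdd (Sum.inl (toLeftMovesAdd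
      (Sum.inr nim_one_leftMoves_nonempty.some)))⟩, ?_⟩
    intro i
    refine leftMoves_add_cases (P := fun i =>
      ¬ MisereP ((nim (m : Ordinal) + nim (1 : Ordinal) + X).moveLeft i)) i ?_ ?_
    · intro i'
      rw [add_moveLeft_inl]
      refine leftMoves_add_cases (P := fun i' =>
        ¬ MisereP ((nim (m : Ordinal) + nim (1 : Ordinal)).moveLeft i' + X)) i' ?_ ?_
      · intro i''
        rw [add_moveLeft_inl]
        obtain ⟨k, hk, hk'⟩ := nim_nat_moveLeft m i''
        rw [hk']
        exact h1 k hk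
      · intro i''
        rw [add_moveLeft_inr, nim_one_moveLeft']
        intro hP
        exact h2 ((misereP_congr (starMoveRelabelling m X)).1 hP)
    · intro j
      rw [add_moveLeft_inr]
      exact h3 j

theorem misereP_nim_one_add (X : PGame) (hX : IsEmpty X.LeftMoves) :
    MisereP (nim (1 : Ordinal) + X) := by
  have h1 : MisereP (nim ((1 : ℕ) : Ordinal) + X) := by
    rw [misereP_nim_add_iff]
    refine ⟨Or.inl one_pos, ?_, fun j => (hX.false j).elim⟩
    intro k hk hP
    obtain rfl : k = 0 := by omega
    rw [Nat.cast_zero] at hP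
    rw [misereP_def] at hP
    obtain ⟨⟨i⟩, -⟩ := hP
    rcases toLeftMovesAdd.symm i with i' | j
    · exact isEmpty_nim_zero_leftMoves.false i'
    · exact hX.false j
  rwa [Nat.cast_one] at h1

theorem misere_main : ∀ (m : ℕ) (X : PGame.{0}), X.Impartial →
    (MisereP (nim (m : Ordinal) + nim (1 : Ordinal) + X) ↔
      MisereP (nim ((m ^^^ 1 : ℕ) : Ordinal) + X))
  | m, X, hX => by
    haveI := hX
    have IH1 : ∀ k, k < m → ∀ (Y : PGame.{0}), Y.Impartial →
        (MisereP (nim (k : Ordinal) + nim (1 : Ordinal) + Y) ↔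
          MisereP (nim ((k ^^^ 1 : ℕ) : Ordinal) + Y)) :=
      fun k hk Y hY => misere_main k Y hY
    have IH2 : ∀ j, (MisereP (nim (m : Ordinal) + nim (1 : Ordinal) + X.moveLeft j) ↔
        MisereP (nim ((m ^^^ 1 : ℕ) : Ordinal) + X.moveLeft j)) :=
      fun j => misere_main m (X.moveLeft j) (Impartial.moveLeft_impartial j)
    rw [misereP_nim_add_star_iff]
    conv_rhs => rw [misereP_nim_add_iff]
    rcases Nat.even_or_odd m with hme | hmo
    · -- m even
      have hm0 : m % 2 = 0 := Nat.even_iff.1 hme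
      have hmx : m ^^^ 1 = m + 1 := xor1_even m hm0
      rw [hmx] at IH2 ⊢
      constructor
      · rintro ⟨A1, A2, A3⟩
        refine ⟨Or.inl (Nat.succ_pos m), ?_, fun j hP => A3 j ((IH2 j).2 hP)⟩
        intro j hj hP
        rcases Nat.lt_succ_iff_lt_or_eq.1 hj with hj' | rfl
        · have hk : j ^^^ 1 < m := xor1_lt_of_lt_even hm0 hj'
          have hP' : MisereP (nim (((j ^^^ 1) ^^^ 1 : ℕ) : Ordinal) + X) := by
            rw [Nat.xor_cancel_right]; exact hP
          exact A1 (j ^^^ 1) hk ((IH1 (j ^^^ 1) hk X hX).2 hP') 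
        · exact A2 hP
      · rintro ⟨-, B1, B2⟩
        refine ⟨?_, B1 m (Nat.lt_succ_self m), fun j hP => B2 j ((IH2 j).1 hP)⟩
        intro k hk hP
        have hk2 : k ^^^ 1 < m + 1 := (xor1_lt_of_lt_even hm0 hk).trans (Nat.lt_succ_self m)
        exact B1 (k ^^^ 1) hk2 ((IH1 k hk X hX).1 hP)
    · -- m odd
      have hm1 : m % 2 = 1 := Nat.odd_iff.1 hmo
      have hmx : m ^^^ 1 = m - 1 := xor1_odd m hm1
      have hm01 : (m - 1) % 2 = 0 := by omega
      rw [hmx] at IH2 ⊢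
      constructor
      · rintro ⟨A1, A2, A3⟩
        refine ⟨?_, ?_, fun j hP => A3 j ((IH2 j).2 hP)⟩
        · by_cases h3 : 1 < m
          · exact Or.inl (by omega)
          · obtain rfl : m = 1 := by omega
            by_cases hXe : Nonempty X.LeftMoves
            · exact Or.inr hXe
            · exfalso
              apply A2
              rw [Nat.cast_one]
              exact misereP_nim_one_add X (not_nonempty_iff.1 hXe)
        · intro j hj hP
          have hkm1 : j ^^^ 1 < m - 1 := xor1_lt_of_lt_even hm01 hj
          have hkm : j ^^^ 1 < m := by omega
          have hP' : MisereP (nim (((j ^^^ 1) ^^^ 1 : ℕ) : Ordinal) + X) := by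
            rw [Nat.xor_cancel_right]; exact hP
          exact A1 (j ^^^ 1) hkm ((IH1 (j ^^^ 1) hkm X hX).2 hP')
      · intro hB
        have hRP : MisereP (nim ((m - 1 : ℕ) : Ordinal) + X) :=
          (misereP_nim_add_iff (m - 1) X).2 hB
        obtain ⟨-, B1, B2⟩ := hB
        refine ⟨?_, not_misereP_of_lt (show m - 1 < m by omega) X hRP,
          fun j hP => B2 j ((IH2 j).1 hP)⟩
        intro k hk hP
        have hP' := (IH1 k hk X hX).1 hP
        by_cases hk' : k = m - 1
        · subst hk'
          have hx : (m - 1) ^^^ 1 = m := by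
            have := xor1_even (m - 1) hm01
            omega
          rw [hx] at hP'
          exact not_misereP_of_lt (show m - 1 < m by omega) X hRP hP'
        · exact B1 (k ^^^ 1) (xor1_lt_of_lt_even hm01 (by omega)) hP'
termination_by m X _ => (m, X)
decreasing_by
  · exact Prod.Lex.left _ _ hk
  · exact Prod.Lex.right _ ⟨j, rfl⟩

/-- For every natural number `m`, the game `*m + *` equals `*(m ^^^ 1)` under misère
equality: for every impartial game `X`, the games `*m + * + X` and `*(m ^^^ 1) + X`
have the same misère outcome.  (Here `* = *1` and `^^^` is bitwise XOR.) -/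
theorem nim_add_star_misere (m : ℕ) :
    ∀ X : PGame.{0}, X.Impartial →
      (MisereP (nim (m : Ordinal) + nim (1 : Ordinal) + X) ↔
        MisereP (nim ((m ^^^ 1 : ℕ) : Ordinal) + X)) := by
  exact fun X hX => misere_main m X hX
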